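/- Let (a_n) be a sequence of positive reals tending to ∞, let {ξ^n}_{n∈ℕ} be a sequence of random Radon measures on Δ, and fix l ∈ ℕ. Assume that for every finite family P = {(s_i,t_i)}_{i=1}^h with 0 ≤ s_i < t_i < ∞, the ℝ^h-valued process {(ξ^n([0,s₁]×(t₁,∞]), …, ξ^n([0,s_h]×(t_h,∞]))}_{n∈ℕ} satisfies an LDP with speed a_n and a good rate function I_P : ℝ^h → [0,∞]. Then the ℝ^{I_l}-valued process {hist_l(ξ^n)}_{n∈ℕ} satisfies an LDP with speed a_n and a good rate function I_l : ℝ^{I_l} → [0,∞]. Moreover, if each I_P has a unique zero point, then so does I_l. -/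

import Mathlib

open MeasureTheory Filter
open scoped ENNReal

namespace PersistenceDiagram

/-- The (extended) half-plane `Δ = {(s,t) ∈ [0,∞]² : s < t}` above the diagonal. -/
abbrev PD : Type := {p : ℝ≥0∞ × ℝ≥0∞ // p.1 < p.2}

/-- The quadrant `[0,s] × (t,∞] ⊆ Δ`. -/
def quad (s t : ℝ≥0∞) : Set PD := {p | p.1.1 ≤ s ∧ t < p.1.2}

/-- The index set of the rectangles constituting the histogram with fineness degree `l`:
pairs `(i,j)` with `i = 0`, `3 ≤ j ≤ l·2^(l+1)` (rectangles `[0,2^{-(l+1)}] × ((j-1)/2^{l+1}, j/2^{l+1}]`)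
or `2 ≤ i`, `i + 2 ≤ j ≤ l·2^(l+1)` (rectangles `((i-1)/2^{l+1}, i/2^{l+1}] × ((j-1)/2^{l+1}, j/2^{l+1}]`). -/
def HistIdx (l : ℕ) : Type :=
  {ij : ℕ × ℕ // (ij.1 = 0 ∧ 3 ≤ ij.2 ∧ ij.2 ≤ l * 2 ^ (l + 1)) ∨
    (2 ≤ ij.1 ∧ ij.1 + 2 ≤ ij.2 ∧ ij.2 ≤ l * 2 ^ (l + 1))}

/-- The rectangle of fineness degree `l` indexed by `(i,j)`. -/
noncomputable def histRect (l i j : ℕ) : Set PD :=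
  if i = 0 then
    {p | p.1.1 ≤ 1 / 2 ^ (l + 1) ∧
      ((j : ℝ≥0∞) - 1) / 2 ^ (l + 1) < p.1.2 ∧ p.1.2 ≤ (j : ℝ≥0∞) / 2 ^ (l + 1)}
  else
    {p | ((i : ℝ≥0∞) - 1) / 2 ^ (l + 1) < p.1.1 ∧ p.1.1 ≤ (i : ℝ≥0∞) / 2 ^ (l + 1) ∧
      ((j : ℝ≥0∞) - 1) / 2 ^ (l + 1) < p.1.2 ∧ p.1.2 ≤ (j : ℝ≥0∞) / 2 ^ (l + 1)}

/-- The histogram of a measure `ξ` on `Δ` with fineness degree `l`. -/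
noncomputable def hist (l : ℕ) (ξ : Measure PD) : HistIdx l → ℝ :=
  fun ij => (ξ (histRect l ij.1.1 ij.1.2)).toReal

/-- The (Donsker–Varadhan) large deviation principle with speed `a n` and rate function `I`. -/
def IsLDP {Ω X : Type*} [MeasurableSpace Ω] [TopologicalSpace X] (P : Measure Ω) (a : ℕ → ℝ)
    (T : ℕ → Ω → X) (I : X → ℝ≥0∞) : Prop :=
  LowerSemicontinuous I ∧
  (∀ F : Set X, IsClosed F →
    limsup (fun n => (((a n)⁻¹ : ℝ) : EReal) * ENNReal.log (P {ω | T n ω ∈ F})) atTop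
      ≤ -((⨅ x ∈ F, I x : ℝ≥0∞) : EReal)) ∧
  (∀ G : Set X, IsOpen G →
    -((⨅ x ∈ G, I x : ℝ≥0∞) : EReal)
      ≤ liminf (fun n => (((a n)⁻¹ : ℝ) : EReal) * ENNReal.log (P {ω | T n ω ∈ G})) atTop)

/-- Good rate function: lower semicontinuous with compact sublevel sets. -/
def GoodRate {X : Type*} [TopologicalSpace X] (I : X → ℝ≥0∞) : Prop :=
  LowerSemicontinuous I ∧ ∀ α : ℝ≥0∞, α ≠ ⊤ → IsCompact {x | I x ≤ α}


set_option linter.unusedSectionVars false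

section Contraction
variable {X Y : Type*} [TopologicalSpace X] [TopologicalSpace Y] [T2Space Y]

noncomputable def pushRate (I0 : X → ℝ≥0∞) (L : X → Y) : Y → ℝ≥0∞ :=
  fun y => ⨅ x ∈ L ⁻¹' {y}, I0 x

lemma pushRate_apply_le (I0 : X → ℝ≥0∞) (L : X → Y) (x : X) : pushRate I0 L (L x) ≤ I0 x :=
  biInf_le I0 (by simp [Set.mem_preimage])

lemma biInf_pushRate (I0 : X → ℝ≥0∞) (L : X → Y) (S : Set Y) :
    ⨅ y ∈ S, pushRate I0 L y = ⨅ x ∈ L ⁻¹' S, I0 x := by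
  apply le_antisymm
  · refine le_iInf₂ fun x hx => ?_
    exact iInf₂_le_of_le (L x) hx (pushRate_apply_le I0 L x)
  · refine le_iInf₂ fun y hy => le_iInf₂ fun x hx => ?_
    have : L x = y := hx
    exact iInf₂_le x (by simp [Set.mem_preimage, this]; exact hy)

lemma pushRate_sublevel (I0 : X → ℝ≥0∞) (hlsc : LowerSemicontinuous I0)
    (hcomp : ∀ α : ℝ≥0∞, α ≠ ⊤ → IsCompact {x | I0 x ≤ α}) {L : X → Y} (hL : Continuous L)
    {α : ℝ≥0∞} (hα : α ≠ ⊤) :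
    {y | pushRate I0 L y ≤ α} = L '' {x | I0 x ≤ α} := by
  have hclosed : ∀ β : ℝ≥0∞, IsClosed {x | I0 x ≤ β} := fun β =>
    lowerSemicontinuous_iff_isClosed_preimage.1 hlsc β
  ext y; constructor
  · intro hy
    set C : ℕ → Set X := fun n => {x | I0 x ≤ α + (↑(n+1) : ℝ≥0∞)⁻¹} ∩ L ⁻¹' {y} with hC
    have hCanti : ∀ n, C (n+1) ⊆ C n := by
      intro n
      apply Set.inter_subset_inter_left
      intro x hx
      refine le_trans hx (add_le_add le_rfl (ENNReal.inv_le_inv.2 ?_))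
      exact_mod_cast Nat.le_succ _
    have hCne : ∀ n, (C n).Nonempty := by
      intro n
      have hlt : pushRate I0 L y < α + (↑(n+1) : ℝ≥0∞)⁻¹ := by
        refine lt_of_le_of_lt hy (ENNReal.lt_add_right hα ?_)
        simp
      rw [pushRate] at hlt
      obtain ⟨x, hx⟩ := iInf_lt_iff.1 hlt
      obtain ⟨hxm, hxI⟩ := iInf_lt_iff.1 hx
      exact ⟨x, le_of_lt hxI, hxm⟩
    have hCclosed : ∀ n, IsClosed (C n) :=
      fun n => (hclosed _).inter (isClosed_singleton.preimage hL)
    have hC0 : IsCompact (C 0) := by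
      refine (hcomp (α + 1) (by finiteness)).of_isClosed_subset (hCclosed 0) ?_
      refine subset_trans Set.inter_subset_left ?_
      intro x hx
      show I0 x ≤ α + 1
      refine le_trans (show I0 x ≤ α + ((0 + 1 : ℕ) : ℝ≥0∞)⁻¹ from hx) (add_le_add le_rfl ?_)
      simp
    obtain ⟨x, hx⟩ := IsCompact.nonempty_iInter_of_sequence_nonempty_isCompact_isClosed
      C hCanti hCne hC0 hCclosed
    have hxmem : ∀ n : ℕ, x ∈ C n := fun n => Set.mem_iInter.1 hx n
    refine ⟨x, ?_, (hxmem 0).2⟩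
    refine ENNReal.le_of_forall_pos_le_add fun ε hε _ => ?_
    obtain ⟨n, hn⟩ := ENNReal.exists_inv_nat_lt (a := (ε : ℝ≥0∞)) (by exact_mod_cast hε.ne' : (ε : ℝ≥0∞) ≠ 0)
    refine le_trans ((hxmem n).1) (add_le_add le_rfl ?_)
    refine le_trans ?_ hn.le
    exact ENNReal.inv_le_inv.2 (by exact_mod_cast Nat.le_succ _)
  · rintro ⟨x, hx, rfl⟩
    exact le_trans (pushRate_apply_le I0 L x) hx

lemma goodRate_pushRate (I0 : X → ℝ≥0∞) (hlsc : LowerSemicontinuous I0)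
    (hcomp : ∀ α : ℝ≥0∞, α ≠ ⊤ → IsCompact {x | I0 x ≤ α}) {L : X → Y} (hL : Continuous L) :
    LowerSemicontinuous (pushRate I0 L) ∧
    ∀ α : ℝ≥0∞, α ≠ ⊤ → IsCompact {y | pushRate I0 L y ≤ α} := by
  have hcomp' : ∀ α : ℝ≥0∞, α ≠ ⊤ → IsCompact {y | pushRate I0 L y ≤ α} := by
    intro α hα
    rw [pushRate_sublevel I0 hlsc hcomp hL hα]
    exact ((hcomp α hα).image hL)
  refine ⟨?_, hcomp'⟩
  rw [lowerSemicontinuous_iff_isClosed_preimage]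
  intro β
  by_cases hβ : β = ⊤
  · subst hβ
    have : pushRate I0 L ⁻¹' Set.Iic ⊤ = Set.univ := by ext y; simp
    rw [this]; exact isClosed_univ
  · exact (hcomp' β hβ).isClosed

end Contraction

instance : BorelSpace PD := Subtype.borelSpace {p : ℝ≥0∞ × ℝ≥0∞ | p.1 < p.2}

def band (s t1 t2 : ℝ≥0∞) : Set PD := {p | p.1.1 ≤ s ∧ t1 < p.1.2 ∧ p.1.2 ≤ t2}
def rect' (s1 s2 t1 t2 : ℝ≥0∞) : Set PD :=
  {p | s1 < p.1.1 ∧ p.1.1 ≤ s2 ∧ t1 < p.1.2 ∧ p.1.2 ≤ t2}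

lemma cont_fst : Continuous (fun p : PD => p.1.1) := continuous_fst.comp continuous_subtype_val
lemma cont_snd : Continuous (fun p : PD => p.1.2) := continuous_snd.comp continuous_subtype_val

lemma ms_fst_le (s : ℝ≥0∞) : MeasurableSet {p : PD | p.1.1 ≤ s} :=
  measurableSet_le cont_fst.measurable measurable_const

lemma ms_lt_fst (s : ℝ≥0∞) : MeasurableSet {p : PD | s < p.1.1} :=
  measurableSet_lt measurable_const cont_fst.measurable

lemma ms_snd_le (t : ℝ≥0∞) : MeasurableSet {p : PD | p.1.2 ≤ t} :=
  measurableSet_le cont_snd.measurable measurable_const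

lemma ms_lt_snd (t : ℝ≥0∞) : MeasurableSet {p : PD | t < p.1.2} :=
  measurableSet_lt measurable_const cont_snd.measurable

lemma measurableSet_quad (s t : ℝ≥0∞) : MeasurableSet (quad s t) :=
  (ms_fst_le s).inter (ms_lt_snd t)

lemma measurableSet_band (s t1 t2 : ℝ≥0∞) : MeasurableSet (band s t1 t2) :=
  (ms_fst_le s).inter ((ms_lt_snd t1).inter (ms_snd_le t2))

lemma measurableSet_rect' (s1 s2 t1 t2 : ℝ≥0∞) : MeasurableSet (rect' s1 s2 t1 t2) :=
  (ms_lt_fst s1).inter ((ms_fst_le s2).inter ((ms_lt_snd t1).inter (ms_snd_le t2)))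

lemma quad_eq_union {t1 t2 : ℝ≥0∞} (h : t1 ≤ t2) (s : ℝ≥0∞) :
    quad s t1 = band s t1 t2 ∪ quad s t2 := by
  ext p
  simp only [quad, band, Set.mem_setOf_eq, Set.mem_union]
  constructor
  · rintro ⟨h1, h2⟩
    rcases le_or_gt p.1.2 t2 with h3 | h3
    · exact Or.inl ⟨h1, h2, h3⟩
    · exact Or.inr ⟨h1, h3⟩
  · rintro (⟨h1, h2, h3⟩ | ⟨h1, h2⟩)
    · exact ⟨h1, h2⟩
    · exact ⟨h1, lt_of_le_of_lt h h2⟩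

lemma band_disjoint_quad (s t1 t2 : ℝ≥0∞) : Disjoint (band s t1 t2) (quad s t2) := by
  rw [Set.disjoint_left]
  rintro p ⟨_, _, h3⟩ ⟨_, h4⟩
  exact absurd h3 (not_le.2 h4)

lemma band_eq_union {s1 s2 : ℝ≥0∞} (h : s1 ≤ s2) (t1 t2 : ℝ≥0∞) :
    band s2 t1 t2 = band s1 t1 t2 ∪ rect' s1 s2 t1 t2 := by
  ext p
  simp only [band, rect', Set.mem_setOf_eq, Set.mem_union]
  constructor
  · rintro ⟨h1, h2, h3⟩
    rcases le_or_gt p.1.1 s1 with h4 | h4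
    · exact Or.inl ⟨h4, h2, h3⟩
    · exact Or.inr ⟨h4, h1, h2, h3⟩
  · rintro (⟨h1, h2, h3⟩ | ⟨h1, h2, h3, h4⟩)
    · exact ⟨le_trans h1 h, h2, h3⟩
    · exact ⟨h2, h3, h4⟩

lemma band_disjoint_rect' (s1 s2 t1 t2 : ℝ≥0∞) :
    Disjoint (band s1 t1 t2) (rect' s1 s2 t1 t2) := by
  rw [Set.disjoint_left]
  rintro p ⟨h1, _, _⟩ ⟨h4, _⟩
  exact absurd h1 (not_le.2 h4)

/-- The quadrant has compact closure, hence finite Radon measure. -/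
lemma quad_lt_top {μ : Measure PD} (hRadon : ∀ K : Set PD, IsCompact K → μ K < ⊤)
    {s t : ℝ≥0∞} (hst : s < t) : μ (quad s t) < ⊤ := by
  set K : Set PD := Subtype.val ⁻¹' (Set.Iic s ×ˢ Set.Ici t) with hK
  have hsub : quad s t ⊆ K := by
    rintro p ⟨h1, h2⟩
    exact ⟨h1, le_of_lt h2⟩
  have hKc : IsCompact K := by
    rw [(Topology.IsEmbedding.subtypeVal).isCompact_iff]
    have himg : Subtype.val '' K = Set.Iic s ×ˢ Set.Ici t := by
      ext q
      constructor
      · rintro ⟨p, hp, rfl⟩; exact hp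
      · intro hq
        exact ⟨⟨q, lt_of_le_of_lt hq.1 (lt_of_lt_of_le hst hq.2)⟩, hq, rfl⟩
    rw [himg]
    exact ((isClosed_Iic.prod isClosed_Ici)).isCompact
  exact lt_of_le_of_lt (measure_mono hsub) (hRadon K hKc)

lemma toReal_band {μ : Measure PD} (hRadon : ∀ K : Set PD, IsCompact K → μ K < ⊤)
    {s t1 t2 : ℝ≥0∞} (hst : s < t1) (ht : t1 ≤ t2) :
    (μ (band s t1 t2)).toReal = (μ (quad s t1)).toReal - (μ (quad s t2)).toReal := by
  have hsplit : μ (quad s t1) = μ (band s t1 t2) + μ (quad s t2) := by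
    rw [quad_eq_union ht s]
    exact measure_union (band_disjoint_quad s t1 t2) (measurableSet_quad s t2)
  have h1 : μ (quad s t1) < ⊤ := quad_lt_top hRadon hst
  have h2 : μ (quad s t2) < ⊤ := quad_lt_top hRadon (lt_of_lt_of_le hst ht)
  have h3 : μ (band s t1 t2) < ⊤ := by
    refine lt_of_le_of_lt ?_ h1
    rw [hsplit]
    exact le_self_add
  rw [hsplit, ENNReal.toReal_add h3.ne h2.ne]
  ring

lemma toReal_rect' {μ : Measure PD} (hRadon : ∀ K : Set PD, IsCompact K → μ K < ⊤)
    {s1 s2 t1 t2 : ℝ≥0∞} (hs : s1 ≤ s2) (hst : s2 < t1) (ht : t1 ≤ t2) :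
    (μ (rect' s1 s2 t1 t2)).toReal
      = ((μ (quad s2 t1)).toReal - (μ (quad s2 t2)).toReal)
        - ((μ (quad s1 t1)).toReal - (μ (quad s1 t2)).toReal) := by
  have hsplit : μ (band s2 t1 t2) = μ (band s1 t1 t2) + μ (rect' s1 s2 t1 t2) := by
    rw [band_eq_union hs t1 t2]
    exact measure_union (band_disjoint_rect' s1 s2 t1 t2) (measurableSet_rect' s1 s2 t1 t2)
  have hb2 : μ (band s2 t1 t2) < ⊤ := by
    refine lt_of_le_of_lt (measure_mono ?_) (quad_lt_top hRadon hst)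
    rintro p ⟨h1, h2, _⟩; exact ⟨h1, h2⟩
  have hb1 : μ (band s1 t1 t2) < ⊤ := by
    refine lt_of_le_of_lt ?_ hb2
    refine measure_mono ?_
    rintro p ⟨h1, h2, h3⟩; exact ⟨le_trans h1 hs, h2, h3⟩
  have hr : μ (rect' s1 s2 t1 t2) < ⊤ := by
    refine lt_of_le_of_lt ?_ hb2
    rw [hsplit]; exact le_add_self
  have e1 := toReal_band hRadon hst ht
  have e2 := toReal_band hRadon (lt_of_le_of_lt hs hst) ht
  have e3 : (μ (band s2 t1 t2)).toReal
      = (μ (band s1 t1 t2)).toReal + (μ (rect' s1 s2 t1 t2)).toReal := by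
    rw [hsplit, ENNReal.toReal_add hb1.ne hr.ne]
  rw [e1, e2] at e3
  linarith


def Ml (l : ℕ) : ℕ := l * 2 ^ (l + 1)

def enc (M i j : ℕ) : Fin ((M + 1) * (M + 1)) :=
  ⟨(M + 1) * (i % (M + 1)) + j % (M + 1), by
    have h1 : i % (M + 1) ≤ M := Nat.lt_succ_iff.1 (Nat.mod_lt _ (Nat.succ_pos M))
    have h2 : j % (M + 1) < M + 1 := Nat.mod_lt _ (Nat.succ_pos M)
    have h3 : (M + 1) * (i % (M + 1)) ≤ (M + 1) * M := Nat.mul_le_mul_left _ h1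
    have h4 : (M + 1) * (M + 1) = (M + 1) * M + (M + 1) := by ring
    omega⟩

lemma enc_div {M i j : ℕ} (hi : i ≤ M) (hj : j ≤ M) : (enc M i j).1 / (M + 1) = i := by
  have h0 : 0 < M + 1 := Nat.succ_pos M
  simp only [enc, Nat.mul_add_div h0]
  rw [Nat.mod_eq_of_lt (Nat.lt_succ_of_le hi), Nat.mod_eq_of_lt (Nat.lt_succ_of_le hj),
    Nat.div_eq_of_lt (Nat.lt_succ_of_le hj)]
  omega

lemma enc_mod {M i j : ℕ} (hj : j ≤ M) : (enc M i j).1 % (M + 1) = j := by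
  simp only [enc, Nat.mul_add_mod]
  rw [Nat.mod_mod_of_dvd j dvd_rfl, Nat.mod_eq_of_lt (Nat.lt_succ_of_le hj)]

lemma two_pow_ne_top (l : ℕ) : (2 ^ (l + 1) : ℝ≥0∞) ≠ ⊤ := ENNReal.pow_ne_top (by norm_num)
lemma two_pow_ne_zero (l : ℕ) : (2 ^ (l + 1) : ℝ≥0∞) ≠ 0 := pow_ne_zero _ (by norm_num)

lemma natdiv_lt {l i j : ℕ} (hij : i < j) :
    ((i : ℝ≥0∞)) / 2 ^ (l + 1) < (j : ℝ≥0∞) / 2 ^ (l + 1) := by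
  rw [div_eq_mul_inv, div_eq_mul_inv, mul_comm (i : ℝ≥0∞), mul_comm (j : ℝ≥0∞)]
  exact ENNReal.mul_lt_mul_right (ENNReal.inv_ne_zero.2 (two_pow_ne_top l))
      (ENNReal.inv_ne_top.2 (two_pow_ne_zero l)) (by exact_mod_cast hij)

lemma natdiv_le {l i j : ℕ} (hij : i ≤ j) :
    ((i : ℝ≥0∞)) / 2 ^ (l + 1) ≤ (j : ℝ≥0∞) / 2 ^ (l + 1) :=
  ENNReal.div_le_div_right (by exact_mod_cast hij) _

noncomputable def sfun (l : ℕ) (k : Fin ((Ml l + 1) * (Ml l + 1))) : ℝ≥0∞ :=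
  if k.1 / (Ml l + 1) < k.1 % (Ml l + 1) then
    ((k.1 / (Ml l + 1) : ℕ) : ℝ≥0∞) / 2 ^ (l + 1) else 0

noncomputable def tfun (l : ℕ) (k : Fin ((Ml l + 1) * (Ml l + 1))) : ℝ≥0∞ :=
  if k.1 / (Ml l + 1) < k.1 % (Ml l + 1) then
    ((k.1 % (Ml l + 1) : ℕ) : ℝ≥0∞) / 2 ^ (l + 1) else 1

lemma sfun_lt_tfun (l : ℕ) (k : Fin ((Ml l + 1) * (Ml l + 1))) : sfun l k < tfun l k := by
  unfold sfun tfun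
  split_ifs with h
  · exact natdiv_lt h
  · exact zero_lt_one

lemma tfun_ne_top (l : ℕ) (k : Fin ((Ml l + 1) * (Ml l + 1))) : tfun l k ≠ ⊤ := by
  unfold tfun
  split_ifs with h
  · exact (ENNReal.div_lt_top (ENNReal.natCast_ne_top _) (two_pow_ne_zero l)).ne
  · exact ENNReal.one_ne_top

lemma sfun_enc {l i j : ℕ} (hij : i < j) (hi : i ≤ Ml l) (hj : j ≤ Ml l) :
    sfun l (enc (Ml l) i j) = (i : ℝ≥0∞) / 2 ^ (l + 1) := by
  unfold sfun
  rw [enc_div hi hj, enc_mod hj, if_pos hij]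

lemma tfun_enc {l i j : ℕ} (hij : i < j) (hi : i ≤ Ml l) (hj : j ≤ Ml l) :
    tfun l (enc (Ml l) i j) = (j : ℝ≥0∞) / 2 ^ (l + 1) := by
  unfold tfun
  rw [enc_div hi hj, enc_mod hj, if_pos hij]



noncomputable def Lmap (l : ℕ) (x : Fin ((Ml l + 1) * (Ml l + 1)) → ℝ) (ij : HistIdx l) : ℝ :=
  if ij.1.1 = 0 then x (enc (Ml l) 1 (ij.1.2 - 1)) - x (enc (Ml l) 1 ij.1.2)
  else (x (enc (Ml l) ij.1.1 (ij.1.2 - 1)) - x (enc (Ml l) ij.1.1 ij.1.2))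
    - (x (enc (Ml l) (ij.1.1 - 1) (ij.1.2 - 1)) - x (enc (Ml l) (ij.1.1 - 1) ij.1.2))

lemma continuous_Lmap (l : ℕ) : Continuous (Lmap l) := by
  have h : ∀ ij : HistIdx l,
      Continuous fun x : Fin ((Ml l + 1) * (Ml l + 1)) → ℝ => Lmap l x ij := by
    intro ij
    by_cases h : ij.1.1 = 0
    · simp only [Lmap, if_pos h]
      fun_prop
    · simp only [Lmap, if_neg h]
      fun_prop
  exact continuous_pi h

lemma one_le_Ml {l : ℕ} (hl : 1 ≤ l) : 1 ≤ Ml l := by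
  have h2 : 1 ≤ 2 ^ (l + 1) := Nat.one_le_two_pow
  calc 1 = 1 * 1 := (one_mul 1).symm
  _ ≤ l * 2 ^ (l + 1) := Nat.mul_le_mul hl h2

lemma natCast_sub_one {j : ℕ} (hj : 1 ≤ j) : ((j : ℝ≥0∞) - 1) = ((j - 1 : ℕ) : ℝ≥0∞) := by
  rw [ENNReal.natCast_sub]
  simp

lemma hist_eq_Lmap {l : ℕ} (hl : 1 ≤ l) (μ : Measure PD)
    (hRadon : ∀ K : Set PD, IsCompact K → μ K < ⊤) :
    hist l μ = Lmap l (fun k => (μ (quad (sfun l k) (tfun l k))).toReal) := by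
  funext ij
  obtain ⟨⟨i, j⟩, hcase⟩ := ij
  have hM1 : 1 ≤ Ml l := one_le_Ml hl
  have hMl : Ml l = l * 2 ^ (l + 1) := rfl
  rcases hcase with ⟨hi0, hj3, hjM⟩ | ⟨hi2, hij2, hjM⟩
  · -- i = 0
    simp only at hi0 hj3 hjM
    have hj1 : 1 ≤ j := by omega
    have hrect : histRect l i j
        = band (1 / 2 ^ (l + 1)) (((j - 1 : ℕ) : ℝ≥0∞) / 2 ^ (l + 1))
          ((j : ℝ≥0∞) / 2 ^ (l + 1)) := by
      rw [histRect, if_pos hi0, natCast_sub_one hj1]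
      rfl
    have hst : (1 : ℝ≥0∞) / 2 ^ (l + 1) < ((j - 1 : ℕ) : ℝ≥0∞) / 2 ^ (l + 1) := by
      have := natdiv_lt (l := l) (i := 1) (j := j - 1) (by omega)
      simpa using this
    have ht : ((j - 1 : ℕ) : ℝ≥0∞) / 2 ^ (l + 1) ≤ ((j : ℕ) : ℝ≥0∞) / 2 ^ (l + 1) :=
      natdiv_le (by omega)
    show (μ (histRect l i j)).toReal = _
    rw [hrect, toReal_band hRadon hst ht]
    simp only [Lmap, if_pos hi0]
    rw [sfun_enc (by omega) hM1 (by omega), tfun_enc (by omega) hM1 (by omega),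
      sfun_enc (by omega) hM1 (by omega), tfun_enc (by omega) hM1 (by omega)]
    norm_num
  · -- 2 ≤ i
    simp only at hi2 hij2 hjM
    have hi0 : i ≠ 0 := by omega
    have hrect : histRect l i j
        = rect' (((i - 1 : ℕ) : ℝ≥0∞) / 2 ^ (l + 1)) ((i : ℝ≥0∞) / 2 ^ (l + 1))
            (((j - 1 : ℕ) : ℝ≥0∞) / 2 ^ (l + 1)) ((j : ℝ≥0∞) / 2 ^ (l + 1)) := by
      rw [histRect, if_neg hi0, natCast_sub_one (by omega : 1 ≤ i),
        natCast_sub_one (by omega : 1 ≤ j)]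
      rfl
    have hs : ((i - 1 : ℕ) : ℝ≥0∞) / 2 ^ (l + 1) ≤ ((i : ℕ) : ℝ≥0∞) / 2 ^ (l + 1) :=
      natdiv_le (by omega)
    have hst : ((i : ℕ) : ℝ≥0∞) / 2 ^ (l + 1) < ((j - 1 : ℕ) : ℝ≥0∞) / 2 ^ (l + 1) :=
      natdiv_lt (by omega)
    have ht : ((j - 1 : ℕ) : ℝ≥0∞) / 2 ^ (l + 1) ≤ ((j : ℕ) : ℝ≥0∞) / 2 ^ (l + 1) :=
      natdiv_le (by omega)
    have hiM : i ≤ Ml l := by omega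
    have hi1M : i - 1 ≤ Ml l := by omega
    have hj1M : j - 1 ≤ Ml l := by omega
    have hjM' : j ≤ Ml l := by omega
    show (μ (histRect l i j)).toReal = _
    rw [hrect, toReal_rect' hRadon hs hst ht]
    simp only [Lmap, if_neg hi0]
    rw [sfun_enc (by omega) hiM hj1M, tfun_enc (by omega) hiM hj1M,
      sfun_enc (by omega) hiM hjM', tfun_enc (by omega) hiM hjM',
      sfun_enc (by omega) hi1M hj1M, tfun_enc (by omega) hi1M hj1M,
      sfun_enc (by omega) hi1M hjM', tfun_enc (by omega) hi1M hjM']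

/-- LDP for the histograms, lifted from LDPs for the tuples of quadrant masses. -/
theorem ldp_histogram {Ω : Type*} [MeasurableSpace Ω]
    (P : Measure Ω) [IsProbabilityMeasure P]
    (a : ℕ → ℝ) (hapos : ∀ n, 0 < a n) (hatop : Tendsto a atTop atTop)
    (l : ℕ) (hl : 1 ≤ l)
    (ξ : ℕ → Ω → Measure PD)
    (hmeas : ∀ n (A : Set PD), MeasurableSet A → Measurable fun ω => ξ n ω A)
    (hRadon : ∀ n ω (K : Set PD), IsCompact K → ξ n ω K < ⊤)
    -- LDPs with good rate functions for all finite tuples of quadrant masses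
    (IP : (h : ℕ) → (Fin h → ℝ≥0∞) → (Fin h → ℝ≥0∞) → ((Fin h → ℝ) → ℝ≥0∞))
    (hIP : ∀ (h : ℕ) (s t : Fin h → ℝ≥0∞), (∀ i, s i < t i) → (∀ i, t i ≠ ⊤) →
      GoodRate (IP h s t) ∧
        IsLDP P a (fun n ω i => (ξ n ω (quad (s i) (t i))).toReal) (IP h s t)) :
    ∃ Il : (HistIdx l → ℝ) → ℝ≥0∞, GoodRate Il ∧
      IsLDP P a (fun n ω => hist l (ξ n ω)) Il ∧
      ((∀ (h : ℕ) (s t : Fin h → ℝ≥0∞) (hs : ∀ i, s i < t i) (ht : ∀ i, t i ≠ ⊤),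
          ∃! x, IP h s t x = 0) →
        ∃! H : HistIdx l → ℝ, Il H = 0) := by
  classical
  set m := (Ml l + 1) * (Ml l + 1) with hm
  obtain ⟨hgood, hldp⟩ := hIP m (sfun l) (tfun l) (sfun_lt_tfun l) (tfun_ne_top l)
  set I0 : (Fin m → ℝ) → ℝ≥0∞ := IP m (sfun l) (tfun l) with hI0
  have hL : Continuous (Lmap l) := continuous_Lmap l
  have hpush := goodRate_pushRate I0 hgood.1 hgood.2 hL
  refine ⟨pushRate I0 (Lmap l), ⟨hpush.1, hpush.2⟩, ⟨hpush.1, ?_, ?_⟩, ?_⟩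
  · -- upper bound for closed sets
    intro F hF
    have hsets : ∀ n, {ω | hist l (ξ n ω) ∈ F}
        = {ω | (fun k => (ξ n ω (quad (sfun l k) (tfun l k))).toReal) ∈ (Lmap l) ⁻¹' F} := by
      intro n
      ext ω
      rw [Set.mem_setOf_eq, Set.mem_setOf_eq, Set.mem_preimage,
        ← hist_eq_Lmap hl (ξ n ω) (fun K hK => hRadon n ω K hK)]
    have hfun : (fun n => (((a n)⁻¹ : ℝ) : EReal)
          * ENNReal.log (P {ω | hist l (ξ n ω) ∈ F}))
        = fun n => (((a n)⁻¹ : ℝ) : EReal)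
          * ENNReal.log (P {ω | (fun k => (ξ n ω (quad (sfun l k) (tfun l k))).toReal)
              ∈ (Lmap l) ⁻¹' F}) := by
      funext n
      rw [hsets n]
    rw [hfun, biInf_pushRate I0 (Lmap l) F]
    exact hldp.2.1 ((Lmap l) ⁻¹' F) (hF.preimage hL)
  · -- lower bound for open sets
    intro G hG
    have hsets : ∀ n, {ω | hist l (ξ n ω) ∈ G}
        = {ω | (fun k => (ξ n ω (quad (sfun l k) (tfun l k))).toReal) ∈ (Lmap l) ⁻¹' G} := by
      intro n
      ext ω
      rw [Set.mem_setOf_eq, Set.mem_setOf_eq, Set.mem_preimage,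
        ← hist_eq_Lmap hl (ξ n ω) (fun K hK => hRadon n ω K hK)]
    have hfun : (fun n => (((a n)⁻¹ : ℝ) : EReal)
          * ENNReal.log (P {ω | hist l (ξ n ω) ∈ G}))
        = fun n => (((a n)⁻¹ : ℝ) : EReal)
          * ENNReal.log (P {ω | (fun k => (ξ n ω (quad (sfun l k) (tfun l k))).toReal)
              ∈ (Lmap l) ⁻¹' G}) := by
      funext n
      rw [hsets n]
    rw [hfun, biInf_pushRate I0 (Lmap l) G]
    exact hldp.2.2 ((Lmap l) ⁻¹' G) (hG.preimage hL)
  · -- unique zero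
    intro huniq
    obtain ⟨x0, hx0, hx0u⟩ := huniq m (sfun l) (tfun l) (sfun_lt_tfun l) (tfun_ne_top l)
    refine ⟨(Lmap l) x0, ?_, ?_⟩
    · exact le_antisymm (le_of_le_of_eq (pushRate_apply_le I0 (Lmap l) x0) hx0) (zero_le)
    · intro H hH
      have hmem : H ∈ {y | pushRate I0 (Lmap l) y ≤ 0} := le_of_eq hH
      rw [pushRate_sublevel I0 hgood.1 hgood.2 hL (by simp : (0 : ℝ≥0∞) ≠ ⊤)] at hmem
      obtain ⟨x, hx, rfl⟩ := hmem
      have : x = x0 := hx0u x (le_antisymm hx (zero_le))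
      rw [this]

end PersistenceDiagram
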